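/- Let ε > 0 and μ > 0, let s = s₁ + i s₂ with s₁ > 0, s₂ ∈ ℝ, and define the stretched fundamental solution Φ̃_s(x, y) = exp(−√(εμ)·s·|x̃ − y|) / (4π·|x̃ − y|) for x̃ ≠ y. Then for every x ∈ Γ₂ and y ∈ Γ₁ one has the decay bound |Φ̃_s(x, y)| ≤ exp(−√(εμ)·σ₀ d/(m+1)) / (4π d). -/

import Mathlib

open Real

lemma coord_le_norm (z : EuclideanSpace ℝ (Fin 3)) (j : Fin 3) : |z j| ≤ ‖z‖ := by
  rw [EuclideanSpace.norm_eq, ← Real.sqrt_sq_eq_abs]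
  apply Real.sqrt_le_sqrt
  have : (z j)^2 = ‖z j‖^2 := by simp [Real.norm_eq_abs, sq_abs]
  rw [this]
  exact Finset.single_le_sum (f := fun i => ‖z i‖ ^ 2) (fun i _ => sq_nonneg _)
    (Finset.mem_univ j)

/-- Decay of the stretched fundamental solution: for x ∈ Γ₂ and y ∈ Γ₁,
|Φ̃_s(x, y)| ≤ exp(−√(εμ)·σ₀ d/(m+1)) / (4π d). -/
theorem stretched_fundamental_solution_decay
    (ε μ : ℝ) (hε : 0 < ε) (hμ : 0 < μ)
    (L : Fin 3 → ℝ) (d σ₀ s₁ s₂ : ℝ) (m : ℕ)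
    (hL : ∀ j, 0 < L j) (hd : 0 < d) (hσ₀ : 0 < σ₀) (hm : 1 ≤ m) (hs₁ : 0 < s₁)
    (σ : Fin 3 → ℝ → ℝ)
    (h1 : ∀ j, ∀ τ : ℝ, |τ| ≤ L j / 2 → σ j τ = 0)
    (h2 : ∀ j, ∀ τ : ℝ, L j / 2 < |τ| → |τ| ≤ L j / 2 + d →
      σ j τ = σ₀ * ((|τ| - L j / 2) / d) ^ m)
    (h3 : ∀ j, ∀ τ : ℝ, L j / 2 + d < |τ| → σ j τ = σ₀)
    (s : ℂ) (hs : s = (s₁ : ℂ) + Complex.I * s₂)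
    (x y : EuclideanSpace ℝ (Fin 3))
    (hxΓ₂ : (∀ j, |x j| ≤ L j / 2 + d) ∧ ∃ j, |x j| = L j / 2 + d)
    (hyΓ₁ : (∀ j, |y j| ≤ L j / 2) ∧ ∃ j, |y j| = L j / 2)
    (xt : EuclideanSpace ℝ (Fin 3))
    (hxt : ∀ j, xt j = x j + s₁⁻¹ * ∫ τ in (0:ℝ)..(x j), σ j τ) :
    ‖Complex.exp (-(Real.sqrt (ε * μ) : ℂ) * s * (‖xt - y‖ : ℂ)) /
        ((4 * π * ‖xt - y‖ : ℝ) : ℂ)‖ ≤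
      Real.exp (-(Real.sqrt (ε * μ)) * (σ₀ * d / (m + 1))) / (4 * π * d) := by
  obtain ⟨hx2, j, hj⟩ := hxΓ₂
  obtain ⟨hy1, -⟩ := hyΓ₁
  set a := Real.sqrt (ε * μ) with ha
  have haPos : 0 < a := Real.sqrt_pos.mpr (mul_pos hε hμ)
  set c : ℝ := σ₀ * d / (m + 1) with hc
  have hcpos : 0 < c := by positivity
  have hLj := hL j
  -- the value of the integral up to L j / 2 + d
  have hint : (∫ τ in (0:ℝ)..(L j / 2 + d), σ j τ) = c := by
    have hσeq : Set.EqOn (σ j)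
        (fun τ => σ₀ * ((max τ (L j / 2) - L j / 2) / d) ^ m)
        (Set.uIcc (0:ℝ) (L j / 2 + d)) := by
      intro τ hτ
      show σ j τ = σ₀ * ((max τ (L j / 2) - L j / 2) / d) ^ m
      rw [Set.uIcc_of_le (by linarith)] at hτ
      obtain ⟨hτ0, hτ1⟩ := hτ
      have habs : |τ| = τ := abs_of_nonneg hτ0
      rcases le_or_gt τ (L j / 2) with h | h
      · rw [h1 j τ (by rw [habs]; exact h)]
        simp [max_eq_right h, zero_pow (by omega : m ≠ 0)]
      · rw [h2 j τ (by rw [habs]; exact h) (by rw [habs]; exact hτ1), habs,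
          max_eq_left h.le]
    rw [intervalIntegral.integral_congr hσeq]
    have hcont : Continuous fun τ : ℝ =>
        σ₀ * ((max τ (L j / 2) - L j / 2) / d) ^ m := by fun_prop
    have hadd := intervalIntegral.integral_add_adjacent_intervals
      (μ := MeasureTheory.volume)
      (a := (0:ℝ)) (b := L j / 2) (c := L j / 2 + d)
      (hcont.intervalIntegrable _ _) (hcont.intervalIntegrable _ _)
    rw [← hadd]
    have e1 : (∫ τ in (0:ℝ)..(L j / 2),
        σ₀ * ((max τ (L j / 2) - L j / 2) / d) ^ m) = 0 := by
      rw [intervalIntegral.integral_congr (g := fun _ => (0:ℝ))]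
      · simp
      · intro τ hτ
        show σ₀ * ((max τ (L j / 2) - L j / 2) / d) ^ m = 0
        rw [Set.uIcc_of_le (by linarith)] at hτ
        simp [max_eq_right hτ.2, zero_pow (by omega : m ≠ 0)]
    have e2 : (∫ τ in (L j / 2)..(L j / 2 + d),
        σ₀ * ((max τ (L j / 2) - L j / 2) / d) ^ m) = c := by
      rw [intervalIntegral.integral_congr
          (g := fun τ => σ₀ / d ^ m * (τ - L j / 2) ^ m)]
      · rw [intervalIntegral.integral_const_mul,
          intervalIntegral.integral_comp_sub_right (fun t => t ^ m) (L j / 2)]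
        simp only [sub_self, add_sub_cancel_left]
        rw [integral_pow]
        rw [hc]
        field_simp
        ring
      · intro τ hτ
        show σ₀ * ((max τ (L j / 2) - L j / 2) / d) ^ m
            = σ₀ / d ^ m * (τ - L j / 2) ^ m
        rw [Set.uIcc_of_le (by linarith)] at hτ
        rw [max_eq_left hτ.1]
        rw [div_pow]; ring
    rw [e1, e2, zero_add]
  -- evenness of σ j
  have heven : ∀ τ : ℝ, σ j (-τ) = σ j τ := by
    intro τ
    rcases le_or_gt |τ| (L j / 2) with h | h
    · rw [h1 j τ h, h1 j (-τ) (by rwa [abs_neg])]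
    · rcases le_or_gt |τ| (L j / 2 + d) with h' | h'
      · rw [h2 j τ h h', h2 j (-τ) (by rwa [abs_neg]) (by rwa [abs_neg]), abs_neg]
      · rw [h3 j τ h', h3 j (-τ) (by rwa [abs_neg])]
  -- lower bound on the j-th coordinate difference
  have hkey : d + s₁⁻¹ * c ≤ |xt j - y j| := by
    have hyj : -(L j / 2) ≤ y j ∧ y j ≤ L j / 2 := abs_le.mp (hy1 j)
    rcases abs_eq (by linarith : (0:ℝ) ≤ L j / 2 + d) |>.mp hj with hx | hx
    · have : xt j = L j / 2 + d + s₁⁻¹ * c := by rw [hxt j, hx, hint]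
      rw [this]
      have h1' : d + s₁⁻¹ * c ≤ L j / 2 + d + s₁⁻¹ * c - y j := by
        nlinarith [inv_pos.mpr hs₁, hyj.2]
      calc d + s₁⁻¹ * c ≤ L j / 2 + d + s₁⁻¹ * c - y j := h1'
        _ ≤ |L j / 2 + d + s₁⁻¹ * c - y j| := le_abs_self _
    · have hneg : (∫ τ in (0:ℝ)..(x j), σ j τ) = -c := by
        rw [hx]
        have hcn := intervalIntegral.integral_comp_neg (a := (0:ℝ))
          (b := L j / 2 + d) (f := σ j)
        simp only [neg_zero] at hcn
        rw [intervalIntegral.integral_symm, ← hcn]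
        simp_rw [heven]
        rw [hint]
      have : xt j = -(L j / 2 + d) - s₁⁻¹ * c := by
        rw [hxt j, hneg, hx]; ring
      rw [this]
      have h1' : d + s₁⁻¹ * c ≤ -((-(L j / 2 + d) - s₁⁻¹ * c) - y j) := by
        nlinarith [inv_pos.mpr hs₁, hyj.1]
      calc d + s₁⁻¹ * c ≤ -((-(L j / 2 + d) - s₁⁻¹ * c) - y j) := h1'
        _ ≤ |(-(L j / 2 + d) - s₁⁻¹ * c) - y j| := neg_le_abs _
  -- lower bound on the norm
  set r : ℝ := ‖xt - y‖ with hr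
  have hrge : d + s₁⁻¹ * c ≤ r := by
    refine le_trans ?_ (le_trans (coord_le_norm (xt - y) j) le_rfl)
    have : (xt - y) j = xt j - y j := rfl
    rw [this]
    exact hkey
  have hs₁inv : 0 < s₁⁻¹ * c := mul_pos (inv_pos.mpr hs₁) hcpos
  have hrpos : 0 < r := by linarith
  have hrd : d ≤ r := by linarith
  -- s₁ * r ≥ c
  have hsr : c ≤ s₁ * r := by
    have : s₁ * (d + s₁⁻¹ * c) ≤ s₁ * r := by
      exact mul_le_mul_of_nonneg_left hrge hs₁.le
    have h2' : s₁ * (d + s₁⁻¹ * c) = s₁ * d + c := by field_simp; try ring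
    nlinarith
  -- compute the absolute value
  rw [norm_div, Complex.norm_exp]
  have hre : (-(a : ℂ) * s * (r : ℂ)).re = -a * s₁ * r := by
    rw [hs]
    simp [Complex.mul_re, Complex.mul_im]
    try ring
  rw [hre, Complex.norm_real, Real.norm_eq_abs, abs_of_pos (by positivity : (0:ℝ) < 4 * π * r)]
  apply div_le_div₀ (by positivity)
  · apply Real.exp_le_exp.mpr
    have : a * c ≤ a * (s₁ * r) := mul_le_mul_of_nonneg_left hsr haPos.le
    nlinarith
  · positivity
  · have : 4 * π * d ≤ 4 * π * r := by
      have hπ : 0 < π := Real.pi_pos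
      nlinarith
    exact this
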